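/- The existential arbitrary arrow update quantifier commutes with diamond: ⟨↑⟩◇_a φ ↔ ◇_a⟨↑⟩φ is valid, where M,s ⊨ ⟨↑⟩φ iff there is an arrow update model (U,o) with modal-logic source and target conditions such that M,s ⊨ ⟨U,o⟩φ. -/

import Mathlib

namespace AAUML

/-- Formulas of arbitrary arrow update model logic over atoms `P` and agents `A`.
An arrow update model is encoded as a finite list of arrows
`(agent, source outcome, source condition, target outcome, target condition)`,
with outcomes drawn from `ℕ`; `upd U o φ` is `[U,o]φ` and `all φ` is `[↑]φ`. -/
inductive Form (P A : Type) : Type where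
  | atom : P → Form P A
  | neg  : Form P A → Form P A
  | and  : Form P A → Form P A → Form P A
  | box  : A → Form P A → Form P A
  | upd  : List (A × ℕ × Form P A × ℕ × Form P A) → ℕ → Form P A → Form P A
  | all  : Form P A → Form P A

/-- An arrow: agent, source outcome, source condition, target outcome, target condition. -/
abbrev Arrow (P A : Type) := A × ℕ × Form P A × ℕ × Form P A

/-- Formulas of basic multi-agent modal logic: no update modality, no quantifier. -/
inductive Form.Modal {P A : Type} : Form P A → Prop
  | atom (p : P) : Form.Modal (.atom p)
  | neg {φ : Form P A} : Form.Modal φ → Form.Modal (.neg φ)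
  | and {φ ψ : Form P A} : Form.Modal φ → Form.Modal ψ → Form.Modal (.and φ ψ)
  | box (a : A) {φ : Form P A} : Form.Modal φ → Form.Modal (.box a φ)

/-- Formulas of arrow update model logic (no arbitrary-update quantifier anywhere,
including inside the conditions of arrow update models). -/
inductive Form.NoQuant {P A : Type} : Form P A → Prop
  | atom (p : P) : Form.NoQuant (.atom p)
  | neg {φ : Form P A} : Form.NoQuant φ → Form.NoQuant (.neg φ)
  | and {φ ψ : Form P A} : Form.NoQuant φ → Form.NoQuant ψ → Form.NoQuant (.and φ ψ)
  | box (a : A) {φ : Form P A} : Form.NoQuant φ → Form.NoQuant (.box a φ)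
  | upd {U : List (Arrow P A)} (o : ℕ) {φ : Form P A} : Form.NoQuant φ →
      (∀ ar ∈ U, Form.NoQuant ar.2.2.1) → (∀ ar ∈ U, Form.NoQuant ar.2.2.2.2) →
      Form.NoQuant (.upd U o φ)

/-- Propositional formulas (no modalities at all). -/
inductive Form.Prp {P A : Type} : Form P A → Prop
  | atom (p : P) : Form.Prp (.atom p)
  | neg {φ : Form P A} : Form.Prp φ → Form.Prp (.neg φ)
  | and {φ ψ : Form P A} : Form.Prp φ → Form.Prp ψ → Form.Prp (.and φ ψ)

/-- A relational (Kripke) model. -/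
structure KModel (P A : Type) : Type 1 where
  World : Type
  R : A → World → World → Prop
  V : World → P → Prop

variable {P A : Type}

/-- Satisfaction for basic modal formulas (junk value `False` on updates/quantifiers;
only used on modal formulas). -/
def msat (M : KModel P A) : M.World → Form P A → Prop
  | s, .atom p => M.V s p
  | s, .neg φ => ¬ msat M s φ
  | s, .and φ ψ => msat M s φ ∧ msat M s ψ
  | s, .box a φ => ∀ t, M.R a s t → msat M t φ
  | _, .upd _ _ _ => False
  | _, .all _ => False

/-- Some arrow of `U` for agent `a` from outcome `o` to outcome `o'` has its (modal)
source condition true at `s` and its target condition true at `s'`. -/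
def marrowOK (M : KModel P A) (U : List (Arrow P A)) (a : A) (o o' : ℕ)
    (s s' : M.World) : Prop :=
  ∃ ψ ψ', (a, o, ψ, o', ψ') ∈ U ∧ msat M s ψ ∧ msat M s' ψ'

/-- All source and target conditions of `U` are basic modal formulas. -/
def ModalArrows (U : List (Arrow P A)) : Prop :=
  ∀ ar ∈ U, Form.Modal ar.2.2.1 ∧ Form.Modal ar.2.2.2.2

mutual
  /-- Satisfaction `M,s ⊨ φ`.  The case `upd U o φ` is interpreted in the product
  model `M*U` (inlined); `all φ` quantifies over all arrow update models with basic
  modal source and target conditions. -/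
  def Form.sat : (M : KModel P A) → M.World → Form P A → Prop
    | M, s, .atom p => M.V s p
    | M, s, .neg φ => ¬ Form.sat M s φ
    | M, s, .and φ ψ => Form.sat M s φ ∧ Form.sat M s ψ
    | M, s, .box a φ => ∀ t, M.R a s t → Form.sat M t φ
    | M, s, .upd U o φ =>
        Form.sat ⟨M.World × ℕ,
          fun a x y => M.R a x.1 y.1 ∧ satList M U a x.2 y.2 x.1 y.1,
          fun x p => M.V x.1 p⟩ (s, o) φ
    | M, s, .all φ => ∀ (U : List (Arrow P A)) (o : ℕ), ModalArrows U →
        Form.sat ⟨M.World × ℕ,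
          fun a x y => M.R a x.1 y.1 ∧ marrowOK M U a x.2 y.2 x.1 y.1,
          fun x p => M.V x.1 p⟩ (s, o) φ
  termination_by M s φ => sizeOf φ

  /-- Some arrow of the list, for agent `a`, from `o` to `o'`, has its source condition
  true at `s` and its target condition true at `s'`. -/
  def satList : (M : KModel P A) → List (Arrow P A) → A → ℕ → ℕ → M.World → M.World → Prop
    | _, [], _, _, _, _, _ => False
    | M, (b, o1, ψ, o2, ψ') :: rest, a, o, o', s, s' =>
        (b = a ∧ o1 = o ∧ o2 = o' ∧ Form.sat M s ψ ∧ Form.sat M s' ψ') ∨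
        satList M rest a o o' s s'
  termination_by M U a o o' s s' => sizeOf U
end

/-- The product `M*U` of a relational model and an arrow update model. -/
def prodModel (M : KModel P A) (U : List (Arrow P A)) : KModel P A :=
  ⟨M.World × ℕ,
   fun a x y => M.R a x.1 y.1 ∧ satList M U a x.2 y.2 x.1 y.1,
   fun x p => M.V x.1 p⟩

def Valid (φ : Form P A) : Prop := ∀ (M : KModel P A) (s : M.World), Form.sat M s φ

def Form.or (φ ψ : Form P A) : Form P A := .neg (.and (.neg φ) (.neg ψ))
def Form.imp (φ ψ : Form P A) : Form P A := .neg (.and φ (.neg ψ))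
def Form.dia (a : A) (φ : Form P A) : Form P A := .neg (.box a (.neg φ))
/-- `⟨U,o⟩φ` -/
def Form.diaUpd (U : List (Arrow P A)) (o : ℕ) (φ : Form P A) : Form P A :=
  .neg (.upd U o (.neg φ))
/-- `⟨↑⟩φ` -/
def Form.ex (φ : Form P A) : Form P A := .neg (.all (.neg φ))
/-- A canonical tautology. -/
def Form.top [Inhabited P] : Form P A := .neg (.and (.atom default) (.neg (.atom default)))
/-- Finite conjunction. -/
def Form.conj [Inhabited P] : List (Form P A) → Form P A
  | [] => Form.top
  | φ :: rest => .and φ (Form.conj rest)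

/-- `Z` is a bisimulation between `M` and `N`. -/
def IsBisim (M N : KModel P A) (Z : M.World → N.World → Prop) : Prop :=
  ∀ s s', Z s s' →
    (∀ p, M.V s p ↔ N.V s' p) ∧
    (∀ a t, M.R a s t → ∃ t', N.R a s' t' ∧ Z t t') ∧
    (∀ a t', N.R a s' t' → ∃ t, M.R a s t ∧ Z t t')

/-- Bisimilarity of pointed models. -/
def Bisimilar (M : KModel P A) (s : M.World) (N : KModel P A) (s' : N.World) : Prop :=
  ∃ Z, IsBisim M N Z ∧ Z s s'

/-- An action model: actions with accessibility relations and preconditions. -/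
structure AModel (P A : Type) : Type 1 where
  Action : Type
  rel : A → Action → Action → Prop
  pre : Action → Form P A

/-- The restricted modal product `M ⊗ E`. -/
def actProd (M : KModel P A) (E : AModel P A) : KModel P A :=
  ⟨{x : M.World × E.Action // Form.sat M x.1 (E.pre x.2)},
   fun a x y => M.R a x.1.1 y.1.1 ∧ E.rel a x.1.2 y.1.2,
   fun x p => M.V x.1.1 p⟩

/-- `M,s ⊨ [E,e]φ`: if the precondition of `e` holds at `s` then `φ` holds at `(s,e)`
in `M ⊗ E`. -/
def actSat (M : KModel P A) (E : AModel P A) (s : M.World) (e : E.Action)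
    (φ : Form P A) : Prop :=
  ∀ h : Form.sat M s (E.pre e), Form.sat (actProd M E) ⟨(s, e), h⟩ φ


def prodA (M : KModel P A) (U : List (Arrow P A)) : KModel P A :=
  ⟨M.World × ℕ,
   fun a x y => M.R a x.1 y.1 ∧ marrowOK M U a x.2 y.2 x.1 y.1,
   fun x p => M.V x.1 p⟩

attribute [reducible] prodA

lemma sat_all (M : KModel P A) (s : M.World) (φ : Form P A) :
    Form.sat M s (.all φ) ↔ ∀ U o, ModalArrows U → Form.sat (prodA M U) (s, o) φ := by
  simp only [Form.sat]

lemma sat_upd (M : KModel P A) (s : M.World) (U : List (Arrow P A)) (o : ℕ) (φ : Form P A) :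
    Form.sat M s (.upd U o φ) ↔ Form.sat (prodModel M U) (s, o) φ := by
  simp only [Form.sat]
  rfl

lemma sat_neg (M : KModel P A) (s : M.World) (φ : Form P A) :
    Form.sat M s (.neg φ) ↔ ¬ Form.sat M s φ := by
  simp only [Form.sat]

lemma sat_box (M : KModel P A) (s : M.World) (a : A) (φ : Form P A) :
    Form.sat M s (.box a φ) ↔ ∀ t, M.R a s t → Form.sat M t φ := by
  simp only [Form.sat]


lemma sat_dia (M : KModel P A) (s : M.World) (a : A) (φ : Form P A) :
    Form.sat M s (Form.dia a φ) ↔ ∃ t, M.R a s t ∧ Form.sat M t φ := by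
  simp only [Form.dia, sat_neg, sat_box]
  push_neg
  rfl

lemma sat_ex (M : KModel P A) (s : M.World) (φ : Form P A) :
    Form.sat M s (Form.ex φ) ↔
      ∃ U o, ModalArrows U ∧ Form.sat (prodA M U) (s, o) φ := by
  simp only [Form.ex, sat_neg, sat_all]
  push_neg
  simp only [sat_neg, not_not]

lemma msat_bisim {φ : Form P A} (hφ : Form.Modal φ) :
    ∀ {M N : KModel P A} {Z : M.World → N.World → Prop}, IsBisim M N Z →
      ∀ {s s'}, Z s s' → (msat M s φ ↔ msat N s' φ) := by
  induction hφ with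
  | atom p => intro M N Z hB s s' hZ; exact (hB s s' hZ).1 p
  | neg _ ih => intro M N Z hB s s' hZ; simp only [msat]; rw [ih hB hZ]
  | and _ _ ih1 ih2 =>
      intro M N Z hB s s' hZ; simp only [msat]; rw [ih1 hB hZ, ih2 hB hZ]
  | box a _ ih =>
      intro M N Z hB s s' hZ
      simp only [msat]
      constructor
      · intro h t' hR'
        obtain ⟨t, hR, hZt⟩ := (hB s s' hZ).2.2 a t' hR'
        exact (ih hB hZt).mp (h t hR)
      · intro h t hR
        obtain ⟨t', hR', hZt⟩ := (hB s s' hZ).2.1 a t hR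
        exact (ih hB hZt).mpr (h t' hR')

lemma marrowOK_bisim {M N : KModel P A} {Z : M.World → N.World → Prop}
    (hB : IsBisim M N Z) {U : List (Arrow P A)} (hU : ModalArrows U) {a : A} {o o' : ℕ}
    {s t : M.World} {s' t' : N.World} (hs : Z s s') (ht : Z t t') :
    marrowOK M U a o o' s t ↔ marrowOK N U a o o' s' t' := by
  unfold marrowOK
  constructor
  · rintro ⟨ψ, ψ', hmem, h1, h2⟩
    exact ⟨ψ, ψ', hmem, (msat_bisim (hU _ hmem).1 hB hs).mp h1,
      (msat_bisim (hU _ hmem).2 hB ht).mp h2⟩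
  · rintro ⟨ψ, ψ', hmem, h1, h2⟩
    exact ⟨ψ, ψ', hmem, (msat_bisim (hU _ hmem).1 hB hs).mpr h1,
      (msat_bisim (hU _ hmem).2 hB ht).mpr h2⟩

lemma satList_congr {M N : KModel P A} (U : List (Arrow P A)) {a : A} {o o' : ℕ}
    {s t : M.World} {s' t' : N.World}
    (h : ∀ ar ∈ U, (Form.sat M s ar.2.2.1 ↔ Form.sat N s' ar.2.2.1) ∧
      (Form.sat M t ar.2.2.2.2 ↔ Form.sat N t' ar.2.2.2.2)) :
    satList M U a o o' s t ↔ satList N U a o o' s' t' := by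
  induction U with
  | nil => simp [satList]
  | cons ar rest ih =>
      obtain ⟨b, o1, ψ, o2, ψ'⟩ := ar
      simp only [satList]
      have h1 := h _ List.mem_cons_self
      rw [h1.1, h1.2, ih fun ar har => h ar (List.mem_cons_of_mem _ har)]

lemma arrow_sizeOf {U : List (Arrow P A)} {ar : Arrow P A} (h : ar ∈ U) :
    sizeOf ar.2.2.1 < sizeOf U ∧ sizeOf ar.2.2.2.2 < sizeOf U := by
  have hlt := List.sizeOf_lt_of_mem h
  obtain ⟨b, o1, ψ, o2, ψ'⟩ := ar
  simp only [Prod.mk.sizeOf_spec] at hlt ⊢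
  omega

lemma prodA_bisim {M N : KModel P A} {Z : M.World → N.World → Prop}
    (hB : IsBisim M N Z) {U : List (Arrow P A)} (hU : ModalArrows U) :
    IsBisim (prodA M U) (prodA N U) (fun x y => Z x.1 y.1 ∧ x.2 = y.2) := by
  rintro ⟨x, n⟩ ⟨x', n'⟩ ⟨hx, hn⟩
  dsimp only at hx hn
  subst hn
  refine ⟨fun p => (hB x x' hx).1 p, ?_, ?_⟩
  · rintro b ⟨y, m⟩ ⟨hR, hOK⟩
    obtain ⟨y', hR', hy⟩ := (hB x x' hx).2.1 b y hR
    exact ⟨(y', m), ⟨hR', (marrowOK_bisim hB hU hx hy).mp hOK⟩, hy, rfl⟩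
  · rintro b ⟨y', m⟩ ⟨hR', hOK⟩
    obtain ⟨y, hR, hy⟩ := (hB x x' hx).2.2 b y' hR'
    exact ⟨(y, m), ⟨hR, (marrowOK_bisim hB hU hx hy).mpr hOK⟩, hy, rfl⟩

lemma sat_bisim : ∀ (n : ℕ) (φ : Form P A), sizeOf φ ≤ n →
    ∀ (M N : KModel P A) (Z : M.World → N.World → Prop), IsBisim M N Z →
      ∀ s s', Z s s' → (Form.sat M s φ ↔ Form.sat N s' φ) := by
  intro n
  induction n using Nat.strong_induction_on with
  | _ n ih =>
  intro φ hφ M N Z hB s s' hZ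
  have IH : ∀ (ψ : Form P A), sizeOf ψ < sizeOf φ →
      ∀ (M N : KModel P A) (Z : M.World → N.World → Prop), IsBisim M N Z →
        ∀ s s', Z s s' → (Form.sat M s ψ ↔ Form.sat N s' ψ) :=
    fun ψ hlt => ih (sizeOf ψ) (lt_of_lt_of_le hlt hφ) ψ le_rfl
  clear ih hφ
  cases φ with
  | atom p => simpa only [Form.sat] using (hB s s' hZ).1 p
  | neg ψ => simp only [Form.sat]; rw [IH ψ (by simp +arith) M N Z hB s s' hZ]
  | and ψ χ =>
      simp only [Form.sat]
      rw [IH ψ (by simp +arith) M N Z hB s s' hZ, IH χ (by simp +arith) M N Z hB s s' hZ]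
  | box b ψ =>
      simp only [Form.sat]
      constructor
      · intro h t' hR'
        obtain ⟨t, hR, hZt⟩ := (hB s s' hZ).2.2 b t' hR'
        exact (IH ψ (by simp +arith) M N Z hB t t' hZt).mp (h t hR)
      · intro h t hR
        obtain ⟨t', hR', hZt⟩ := (hB s s' hZ).2.1 b t hR
        exact (IH ψ (by simp +arith) M N Z hB t t' hZt).mpr (h t' hR')
  | upd U o ψ =>
      rw [sat_upd, sat_upd]
      have hcond : ∀ ar ∈ U, sizeOf ar.2.2.1 < sizeOf (Form.upd U o ψ) ∧
          sizeOf ar.2.2.2.2 < sizeOf (Form.upd U o ψ) := by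
        intro ar har
        have := arrow_sizeOf har
        simp only [Form.upd.sizeOf_spec]
        omega
      have hB' : IsBisim (prodModel M U) (prodModel N U)
          (fun x y => Z x.1 y.1 ∧ x.2 = y.2) := by
        rintro ⟨x, m⟩ ⟨x', m'⟩ ⟨hx, hm⟩
        dsimp only at hx hm
        subst hm
        refine ⟨fun p => (hB x x' hx).1 p, ?_, ?_⟩
        · rintro b ⟨y, k⟩ ⟨hR, hL⟩
          obtain ⟨y', hR', hy⟩ := (hB x x' hx).2.1 b y hR
          refine ⟨(y', k), ⟨hR', ?_⟩, hy, rfl⟩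
          exact (satList_congr U fun ar har =>
            ⟨IH _ (hcond ar har).1 M N Z hB x x' hx,
             IH _ (hcond ar har).2 M N Z hB y y' hy⟩).mp hL
        · rintro b ⟨y', k⟩ ⟨hR', hL⟩
          obtain ⟨y, hR, hy⟩ := (hB x x' hx).2.2 b y' hR'
          refine ⟨(y, k), ⟨hR, ?_⟩, hy, rfl⟩
          exact (satList_congr U fun ar har =>
            ⟨IH _ (hcond ar har).1 M N Z hB x x' hx,
             IH _ (hcond ar har).2 M N Z hB y y' hy⟩).mpr hL
      exact IH ψ (by simp +arith) (prodModel M U) (prodModel N U) _ hB'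
        (s, o) (s', o) ⟨hZ, rfl⟩
  | all ψ =>
      rw [sat_all, sat_all]
      constructor
      · intro h U o hU
        exact (IH ψ (by simp +arith) (prodA M U) (prodA N U) _ (prodA_bisim hB hU)
          (s, o) (s', o) ⟨hZ, rfl⟩).mp (h U o hU)
      · intro h U o hU
        exact (IH ψ (by simp +arith) (prodA M U) (prodA N U) _ (prodA_bisim hB hU)
          (s, o) (s', o) ⟨hZ, rfl⟩).mpr (h U o hU)


/-- Extract some atom from a formula. -/
def someAtom : Form P A → P
  | .atom p => p
  | .neg φ => someAtom φ
  | .and φ _ => someAtom φ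
  | .box _ φ => someAtom φ
  | .upd _ _ φ => someAtom φ
  | .all φ => someAtom φ

lemma msat_topf (M : KModel P A) (s : M.World) (p : P) :
    msat M s (Form.neg (Form.and (Form.atom p) (Form.neg (Form.atom p)))) := by
  simp only [msat]
  exact fun h => h.2 h.1

lemma modal_topf (p : P) :
    Form.Modal (A := A) (Form.neg (Form.and (Form.atom p) (Form.neg (Form.atom p)))) :=
  .neg (.and (.atom p) (.neg (.atom p)))

lemma le_foldr_max (l : List ℕ) (o : ℕ) :
    o ≤ l.foldr max o ∧ ∀ x ∈ l, x ≤ l.foldr max o := by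
  induction l with
  | nil => simp
  | cons a l ih =>
      refine ⟨le_trans ih.1 (le_max_right _ _), ?_⟩
      intro x hx
      rcases List.mem_cons.mp hx with rfl | hx
      · exact le_max_left _ _
      · exact le_trans (ih.2 x hx) (le_max_right _ _)

lemma fresh_bisim (M : KModel P A) (U : List (Arrow P A)) {o' : ℕ}
    (hfresh : ∀ ar ∈ U, ar.2.2.2.1 ≠ o') (ar0 : Arrow P A)
    (h0 : ar0.2.2.2.1 ≠ o') (hsrc : ar0.2.1 = o') :
    IsBisim (prodA M (ar0 :: U)) (prodA M U) (fun x y => x = y ∧ x.2 ≠ o') := by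
  rintro ⟨x, n⟩ y ⟨rfl, hn⟩
  dsimp only at hn
  refine ⟨fun p => Iff.rfl, ?_, ?_⟩
  · rintro b ⟨z, m⟩ ⟨hR, hOK⟩
    obtain ⟨ψ, ψ', hmem, h1, h2⟩ := hOK
    rcases List.mem_cons.mp hmem with heq | hmem'
    · exfalso
      subst heq
      simp only at hsrc
      exact hn hsrc
    · refine ⟨(z, m), ⟨hR, ψ, ψ', hmem', h1, h2⟩, rfl, ?_⟩
      simpa using hfresh _ hmem'
  · rintro b ⟨z, m⟩ ⟨hR, hOK⟩
    obtain ⟨ψ, ψ', hmem, h1, h2⟩ := hOK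
    refine ⟨(z, m), ⟨hR, ψ, ψ', List.mem_cons_of_mem _ hmem, h1, h2⟩, rfl, ?_⟩
    simpa using hfresh _ hmem

/-- the existential arbitrary arrow update quantifier commutes with
diamond: `⟨↑⟩◇_a φ ↔ ◇_a⟨↑⟩φ` is valid. -/
theorem ex_dia (P A : Type) (a : A) (φ : Form P A) :
    ∀ (M : KModel P A) (s : M.World),
      Form.sat M s (Form.ex (Form.dia a φ)) ↔
        Form.sat M s (Form.dia a (Form.ex φ)) := by
  intro M s
  rw [sat_ex, sat_dia]
  constructor
  · rintro ⟨U, o, hU, hd⟩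
    rw [sat_dia] at hd
    obtain ⟨⟨t, o1⟩, hRel, hφ⟩ := hd
    obtain ⟨hR, hOK⟩ := hRel
    exact ⟨t, hR, (sat_ex M t φ).mpr ⟨U, o1, hU, hφ⟩⟩
  · rintro ⟨t, hR, he⟩
    rw [sat_ex] at he
    obtain ⟨U, o, hU, hφ⟩ := he
    set o' : ℕ := (U.map fun ar => ar.2.2.2.1).foldr max o + 1 with ho'def
    set p : P := someAtom φ
    set τ : Form P A := Form.neg (Form.and (Form.atom p) (Form.neg (Form.atom p))) with hτ
    set ar0 : Arrow P A := (a, o', τ, o, τ) with har0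
    have hfresh : ∀ ar ∈ U, ar.2.2.2.1 ≠ o' := by
      intro ar har
      have := (le_foldr_max (U.map fun ar => ar.2.2.2.1) o).2 _
        (List.mem_map_of_mem har)
      omega
    have ho : o ≠ o' := by
      have := (le_foldr_max (U.map fun ar => ar.2.2.2.1) o).1
      omega
    have hU' : ModalArrows (ar0 :: U) := by
      intro ar har
      rcases List.mem_cons.mp har with rfl | har
      · exact ⟨modal_topf p, modal_topf p⟩
      · exact hU ar har
    refine ⟨ar0 :: U, o', hU', ?_⟩
    rw [sat_dia]
    refine ⟨(t, o), ⟨hR, τ, τ, ?_, msat_topf M s p, msat_topf M t p⟩, ?_⟩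
    · exact List.mem_cons_self
    · have hB := fresh_bisim M U hfresh ar0 (by simp [har0]; exact ho) (by simp [har0])
      exact (sat_bisim (sizeOf φ) φ le_rfl _ _ _ hB (t, o) (t, o) ⟨rfl, ho⟩).mpr hφ

end AAUML
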